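/- For a Z-graded commutative ring A the following are equivalent: (1) A_0 is a noetherian ring and A is a finitely generated A_0-algebra; (2) A is a noetherian ring; (3) A satisfies the ascending chain condition on homogeneous ideals (equivalently, every homogeneous ideal of A is finitely generated). Moreover, if these hold and M is a finitely generated graded A-module, then each graded piece M_d is a finitely generated A_0-module. -/

import Mathlib

open DirectSum

section aux
variable {A M : Type*} [CommRing A] [AddCommGroup M] [Module A M]
variable (𝒜 : ℤ → AddSubgroup A) [GradedRing 𝒜]
variable (ℳ : ℤ → AddSubgroup M) [DirectSum.Decomposition ℳ] [SetLike.GradedSMul 𝒜 ℳ]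

lemma key_comp (a : A) {x : M} {e : ℤ} (hx : x ∈ ℳ e) (d : ℤ) :
    (DirectSum.decompose ℳ (a • x) d : M) = (DirectSum.decompose 𝒜 a (d - e) : A) • x := by
  induction a using DirectSum.Decomposition.inductionOn 𝒜 with
  | zero => simp
  | @homogeneous i b =>
      obtain ⟨b, hb⟩ := b
      have hbx : (b : A) • x ∈ ℳ (i + e) := SetLike.GradedSMul.smul_mem hb hx
      by_cases h : i + e = d
      · subst h
        rw [DirectSum.decompose_of_mem_same ℳ hbx]
        rw [show i + e - e = i by ring, DirectSum.decompose_of_mem_same 𝒜 hb]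
      · rw [DirectSum.decompose_of_mem_ne ℳ hbx h,
          DirectSum.decompose_of_mem_ne 𝒜 hb (show i ≠ d - e by omega), zero_smul]
  | add a a' ha ha' =>
      rw [add_smul, DirectSum.decompose_add, DirectSum.add_apply, AddSubgroup.coe_add, ha, ha',
        DirectSum.decompose_add, DirectSum.add_apply, AddSubgroup.coe_add, add_smul]

set_option synthInstance.maxHeartbeats 400000 in
lemma proj_sum {α : Type*} (d : ℤ) (s : Finset α) (f : α → M) :
    (DirectSum.decompose ℳ (∑ i ∈ s, f i) d : M) = ∑ i ∈ s, (DirectSum.decompose ℳ (f i) d : M) := by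
  rw [DirectSum.decompose_sum, DFinsupp.finset_sum_apply, AddSubmonoidClass.coe_finset_sum]

lemma mem_closure_of_mem_span (d : ℤ) (S : Set M) (hS : S ⊆ (ℳ d : Set M)) {z : M}
    (hz : z ∈ ℳ d) (hzs : z ∈ Submodule.span A S) :
    z ∈ AddSubgroup.closure {y : M | ∃ a ∈ 𝒜 0, ∃ x ∈ S, y = a • x} := by
  obtain ⟨c, hc, hsum⟩ := Submodule.mem_span_set.mp hzs
  have hz2 : z = ∑ x ∈ c.support, (DirectSum.decompose ℳ ((c x) • x) d : M) := by
    conv_lhs => rw [← DirectSum.decompose_of_mem_same ℳ hz, ← hsum, Finsupp.sum,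
      proj_sum ℳ d _ _]
  rw [hz2]
  refine AddSubgroup.sum_mem _ fun x hx => ?_
  have hk := key_comp 𝒜 ℳ (c x) (hS (hc hx)) d
  rw [sub_self] at hk
  rw [hk]
  exact AddSubgroup.subset_closure ⟨_, SetLike.coe_mem _, x, hc hx, rfl⟩

lemma exists_finset_span (S : Set M) (h : (Submodule.span A S).FG) :
    ∃ T : Finset M, ↑T ⊆ S ∧ Submodule.span A (T : Set M) = Submodule.span A S := by
  classical
  obtain ⟨G, hG⟩ := h
  have hGS : ∀ g ∈ G, g ∈ Submodule.span A S := fun g hg =>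
    hG ▸ Submodule.subset_span (by exact_mod_cast hg)
  choose! t ht hmem using fun g (hg : g ∈ G) =>
    Submodule.mem_span_finite_of_mem_span (hGS g hg)
  refine ⟨G.biUnion t, ?_, le_antisymm (Submodule.span_le.mpr ?_) ?_⟩
  · intro x hx
    simp only [Finset.coe_biUnion, Set.mem_iUnion, Finset.mem_coe] at hx
    obtain ⟨g, hg, hx⟩ := hx
    exact ht g hg hx
  · intro x hx
    simp only [Finset.coe_biUnion, Set.mem_iUnion, Finset.mem_coe] at hx
    obtain ⟨g, hg, hx⟩ := hx
    exact Submodule.subset_span (ht g hg hx)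
  · rw [← hG]
    refine Submodule.span_le.mpr fun g hg => ?_
    have : g ∈ Submodule.span A ((t g : Set M)) := hmem g (by exact_mod_cast hg)
    exact Submodule.span_mono (Finset.coe_subset.mpr (Finset.subset_biUnion_of_mem t
      (by exact_mod_cast hg))) this


lemma comp_fg (hFG : ∀ I : Ideal A, I.IsHomogeneous 𝒜 → I.FG) (e : ℤ) :
    ∃ G : Finset A, ↑G ⊆ (𝒜 e : Set A) ∧ ∀ z ∈ 𝒜 e,
      z ∈ AddSubgroup.closure {y : A | ∃ a ∈ 𝒜 0, ∃ x ∈ (G : Set A), y = a • x} := by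
  have hhom : ∀ x ∈ (𝒜 e : Set A), SetLike.IsHomogeneousElem 𝒜 x := fun x hx => ⟨e, hx⟩
  have hfg : (Submodule.span A (𝒜 e : Set A)).FG := hFG _ (Ideal.homogeneous_span 𝒜 _ hhom)
  obtain ⟨G, hG1, hG2⟩ := exists_finset_span (𝒜 e : Set A) hfg
  refine ⟨G, hG1, fun z hz => ?_⟩
  exact mem_closure_of_mem_span 𝒜 𝒜 e _ hG1 hz (hG2 ▸ Submodule.subset_span hz)

lemma grade_zero_noeth (hFG : ∀ I : Ideal A, I.IsHomogeneous 𝒜 → I.FG) :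
    IsNoetherianRing ↥(𝒜 0) := by
  rw [isNoetherianRing_iff_ideal_fg]
  intro J
  classical
  set S : Set A := (↑) '' (J : Set ↥(𝒜 0)) with hSdef
  have hhom : ∀ x ∈ S, SetLike.IsHomogeneousElem 𝒜 x := by
    rintro _ ⟨j, _, rfl⟩; exact ⟨0, j.2⟩
  have hfg : (Submodule.span A S).FG := hFG _ (Ideal.homogeneous_span 𝒜 _ hhom)
  obtain ⟨T, hTS, hTspan⟩ := exists_finset_span S hfg
  have hTsub : (T : Set A) ⊆ (𝒜 0 : Set A) := fun x hx => by
    obtain ⟨j, _, rfl⟩ := hTS hx; exact j.2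
  set T₀ : Finset ↥(𝒜 0) := T.preimage (↑) (Subtype.coe_injective.injOn) with hT0def
  have hT0mem : ∀ t : ↥(𝒜 0), t ∈ T₀ → t ∈ J := by
    intro t ht
    rw [hT0def, Finset.mem_preimage] at ht
    obtain ⟨j, hj, hjt⟩ := hTS ht
    rwa [show t = j from Subtype.ext hjt.symm]
  refine ⟨T₀, le_antisymm (Ideal.span_le.mpr fun t ht => hT0mem t ht) fun z hz => ?_⟩
  have hzs : (z : A) ∈ Submodule.span A (T : Set A) := by
    rw [hTspan]; exact Submodule.subset_span ⟨z, hz, rfl⟩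
  have hcl := mem_closure_of_mem_span 𝒜 𝒜 0 (T : Set A) hTsub z.2 hzs
  have hle : AddSubgroup.closure {y : A | ∃ a ∈ 𝒜 0, ∃ x ∈ (T : Set A), y = a • x}
      ≤ (Ideal.span (T₀ : Set ↥(𝒜 0))).toAddSubgroup.map (𝒜 0).subtype := by
    rw [AddSubgroup.closure_le]
    rintro _ ⟨a, ha, x, hx, rfl⟩
    have hx0 : x ∈ 𝒜 0 := hTsub hx
    have ht0 : (⟨x, hx0⟩ : ↥(𝒜 0)) ∈ T₀ := by rw [hT0def, Finset.mem_preimage]; exact hx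
    refine ⟨⟨a, ha⟩ * ⟨x, hx0⟩, Ideal.mul_mem_left _ _ (Ideal.subset_span ht0), ?_⟩
    simp [smul_eq_mul]
  obtain ⟨w, hw, hwz⟩ := hle hcl
  rwa [show w = z from Subtype.ext hwz] at hw


/-- Inclusion of the degree-zero subring. -/
def gradeZeroIncl : ↥(𝒜 0) →+* A where
  toFun := (↑)
  map_one' := rfl
  map_mul' _ _ := rfl
  map_zero' := rfl
  map_add' _ _ := rfl

lemma noeth_of_fg (hN : IsNoetherianRing ↥(𝒜 0)) (s : Finset A)
    (hs : Subring.closure ((𝒜 0 : Set A) ∪ ↑s) = ⊤) : IsNoetherianRing A := by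
  letI : Algebra ↥(𝒜 0) A := (gradeZeroIncl 𝒜).toAlgebra
  haveI : Algebra.FiniteType ↥(𝒜 0) A := by
    refine ⟨⟨s, ?_⟩⟩
    rw [eq_top_iff]
    have hle : Subring.closure ((𝒜 0 : Set A) ∪ ↑s) ≤
        (Algebra.adjoin ↥(𝒜 0) (s : Set A)).toSubring := by
      rw [Subring.closure_le]
      rintro x (hx | hx)
      · exact (Algebra.adjoin ↥(𝒜 0) (s : Set A)).algebraMap_mem ⟨x, hx⟩
      · exact Algebra.subset_adjoin hx
    intro x _
    exact hle (by rw [hs]; trivial)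
  exact Algebra.FiniteType.isNoetherianRing ↥(𝒜 0) A


lemma alg_fg (hFG : ∀ I : Ideal A, I.IsHomogeneous 𝒜 → I.FG) :
    ∃ s : Finset A, Subring.closure ((𝒜 0 : Set A) ∪ ↑s) = ⊤ := by
  classical
  set Sp : Set A := {x | ∃ e : ℤ, 0 < e ∧ x ∈ 𝒜 e} with hSpdef
  set Sn : Set A := {x | ∃ e : ℤ, e < 0 ∧ x ∈ 𝒜 e} with hSndef
  have hfgp : (Submodule.span A Sp).FG :=
    hFG _ (Ideal.homogeneous_span 𝒜 _ (fun x hx => ⟨hx.choose, hx.choose_spec.2⟩))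
  have hfgn : (Submodule.span A Sn).FG :=
    hFG _ (Ideal.homogeneous_span 𝒜 _ (fun x hx => ⟨hx.choose, hx.choose_spec.2⟩))
  obtain ⟨X, hXSp, hXspan⟩ := exists_finset_span Sp hfgp
  obtain ⟨Y, hYSn, hYspan⟩ := exists_finset_span Sn hfgn
  choose! ex hex1 hex2 using fun x (hx : x ∈ (X : Set A)) => hXSp hx
  choose! ey hey1 hey2 using fun y (hy : y ∈ (Y : Set A)) => hYSn hy
  set D : ℤ := ((X.sup fun x => (ex x).toNat : ℕ) : ℤ) + 1 with hDdef
  set E : ℤ := ((Y.sup fun y => (-ey y).toNat : ℕ) : ℤ) + 1 with hEdef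
  have hD1 : 1 ≤ D := by simp [hDdef]
  have hE1 : 1 ≤ E := by simp [hEdef]
  have hDX : ∀ x ∈ (X : Set A), ex x < D := by
    intro x hx
    have h1 : ex x ≤ ((ex x).toNat : ℤ) := Int.self_le_toNat _
    have h2 : ((ex x).toNat : ℤ) ≤ ((X.sup fun x => (ex x).toNat : ℕ) : ℤ) := by
      exact_mod_cast Finset.le_sup (f := fun x => (ex x).toNat) hx
    omega
  have hEY : ∀ y ∈ (Y : Set A), -E < ey y := by
    intro y hy
    have h1 : -ey y ≤ ((-ey y).toNat : ℤ) := Int.self_le_toNat _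
    have h2 : ((-ey y).toNat : ℤ) ≤ ((Y.sup fun y => (-ey y).toNat : ℕ) : ℤ) := by
      exact_mod_cast Finset.le_sup (f := fun y => (-ey y).toNat) hy
    omega
  choose G hG1 hG2 using comp_fg 𝒜 hFG
  refine ⟨X ∪ Y ∪ (Finset.Ioo (-E) D).biUnion G, ?_⟩
  set s : Finset A := X ∪ Y ∪ (Finset.Ioo (-E) D).biUnion G with hsdef
  set B := Subring.closure ((𝒜 0 : Set A) ∪ ↑s) with hBdef
  have hmemB : ∀ n : ℕ, ∀ d : ℤ, d.natAbs ≤ n → ∀ z ∈ 𝒜 d, z ∈ B := by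
    intro n
    induction n using Nat.strong_induction_on with
    | _ n ih =>
    intro d hdn z hz
    by_cases hwin : -E < d ∧ d < D
    · have hcl := hG2 d z hz
      have hle : AddSubgroup.closure {y : A | ∃ a ∈ 𝒜 0, ∃ x ∈ (G d : Set A), y = a • x} ≤
          B.toAddSubgroup := by
        rw [AddSubgroup.closure_le]
        rintro _ ⟨a, ha, x, hx, rfl⟩
        have hxs : x ∈ s := Finset.mem_union.mpr (Or.inr
          (Finset.mem_biUnion.mpr ⟨d, Finset.mem_Ioo.mpr ⟨hwin.1, hwin.2⟩, hx⟩))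
        rw [smul_eq_mul]
        exact Subring.mul_mem _ (Subring.subset_closure (Or.inl ha))
          (Subring.subset_closure (Or.inr hxs))
      exact hle hcl
    · rcases le_or_gt D d with hge | hlt
      · have hzsp : z ∈ Submodule.span A Sp := Submodule.subset_span ⟨d, by omega, hz⟩
        rw [← hXspan] at hzsp
        obtain ⟨c, hcs, hcsum⟩ := Submodule.mem_span_set.mp hzsp
        have hzeq : z = ∑ x ∈ c.support, (DirectSum.decompose 𝒜 ((c x) • x) d : A) := by
          conv_lhs => rw [← DirectSum.decompose_of_mem_same 𝒜 hz, ← hcsum, Finsupp.sum,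
            proj_sum 𝒜 d _ _]
        rw [hzeq]
        refine Subring.sum_mem _ fun x hx => ?_
        have hxX : x ∈ (X : Set A) := hcs hx
        rw [key_comp 𝒜 𝒜 (c x) (hex2 x hxX) d, smul_eq_mul]
        have hxs : x ∈ s := Finset.mem_union.mpr (Or.inl (Finset.mem_union.mpr (Or.inl hxX)))
        refine Subring.mul_mem _ ?_ (Subring.subset_closure (Or.inr hxs))
        refine ih (d - ex x).natAbs ?_ (d - ex x) le_rfl _ (SetLike.coe_mem _)
        have h1 := hex1 x hxX
        have h2 := hDX x hxX
        omega
      · have hdE : d ≤ -E := by omega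
        have hzsn : z ∈ Submodule.span A Sn := Submodule.subset_span ⟨d, by omega, hz⟩
        rw [← hYspan] at hzsn
        obtain ⟨c, hcs, hcsum⟩ := Submodule.mem_span_set.mp hzsn
        have hzeq : z = ∑ y ∈ c.support, (DirectSum.decompose 𝒜 ((c y) • y) d : A) := by
          conv_lhs => rw [← DirectSum.decompose_of_mem_same 𝒜 hz, ← hcsum, Finsupp.sum,
            proj_sum 𝒜 d _ _]
        rw [hzeq]
        refine Subring.sum_mem _ fun y hy => ?_
        have hyY : y ∈ (Y : Set A) := hcs hy
        rw [key_comp 𝒜 𝒜 (c y) (hey2 y hyY) d, smul_eq_mul]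
        have hys : y ∈ s := Finset.mem_union.mpr (Or.inl (Finset.mem_union.mpr (Or.inr hyY)))
        refine Subring.mul_mem _ ?_ (Subring.subset_closure (Or.inr hys))
        refine ih (d - ey y).natAbs ?_ (d - ey y) le_rfl _ (SetLike.coe_mem _)
        have h1 := hey1 y hyY
        have h2 := hEY y hyY
        omega
  rw [eq_top_iff]
  intro z _
  rw [← DirectSum.sum_support_decompose 𝒜 z]
  exact Subring.sum_mem _ fun i _ => hmemB i.natAbs i le_rfl _ (SetLike.coe_mem _)

end aux

/-- For a `ℤ`-graded commutative ring `A` the following are equivalent: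
(1) `A₀` is noetherian and `A` is a finitely generated `A₀`-algebra; (2) `A` is noetherian;
(3) every homogeneous ideal of `A` is finitely generated.  Moreover, if these hold and `M`
is a finitely generated graded `A`-module, each graded piece `M_d` is a finitely generated
`A₀`-module. -/
theorem stmt_12 {A M : Type*} [CommRing A] [AddCommGroup M] [Module A M]
    (𝒜 : ℤ → AddSubgroup A) [GradedRing 𝒜]
    (ℳ : ℤ → AddSubgroup M) [DirectSum.Decomposition ℳ] [SetLike.GradedSMul 𝒜 ℳ] :
    ((IsNoetherianRing (𝒜 0) ∧ ∃ s : Finset A, Subring.closure ((𝒜 0 : Set A) ∪ ↑s) = ⊤)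
        ↔ IsNoetherianRing A) ∧
    (IsNoetherianRing A ↔ ∀ I : Ideal A, I.IsHomogeneous 𝒜 → I.FG) ∧
    (IsNoetherianRing A → Module.Finite A M →
      ∀ d : ℤ, ∃ s : Finset M, ↑s ⊆ (ℳ d : Set M) ∧
        ∀ m ∈ ℳ d, m ∈ AddSubgroup.closure {y : M | ∃ a ∈ 𝒜 0, ∃ x ∈ s, y = a • x}) := by
  refine ⟨⟨fun ⟨hN, s, hs⟩ => noeth_of_fg 𝒜 hN s hs, fun hA => ?_⟩,
    ⟨fun hA I _ => (isNoetherianRing_iff_ideal_fg A).mp hA I, fun hFG => ?_⟩,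
    fun hA hMF d => ?_⟩
  · have hFG : ∀ I : Ideal A, I.IsHomogeneous 𝒜 → I.FG :=
      fun I _ => (isNoetherianRing_iff_ideal_fg A).mp hA I
    exact ⟨grade_zero_noeth 𝒜 hFG, alg_fg 𝒜 hFG⟩
  · obtain ⟨s, hs⟩ := alg_fg 𝒜 hFG
    exact noeth_of_fg 𝒜 (grade_zero_noeth 𝒜 hFG) s hs
  · haveI := hA; haveI := hMF
    haveI : IsNoetherian A M := isNoetherian_of_isNoetherianRing_of_finite A M
    have hfg : (Submodule.span A (ℳ d : Set M)).FG := IsNoetherian.noetherian _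
    obtain ⟨T, hTsub, hTspan⟩ := exists_finset_span (ℳ d : Set M) hfg
    exact ⟨T, hTsub, fun m hm => mem_closure_of_mem_span 𝒜 ℳ d (T : Set M) hTsub hm
      (hTspan ▸ Submodule.subset_span hm)⟩
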